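/- Let G be a finite simple graph with vertex set {v_1,…,v_n}, and let H be the bipartite double cover of G: H has parts X = {x_1,…,x_n} and Y = {y_1,…,y_n} and edge set {x_i y_j : v_i v_j ∈ E(G)}, with strict majority thresholds on both G and H. If g_0 : V(H) → {0,1} is a perfect target set for H under the non-progressive strict majority process, then the assignment f_0 on G defined by f_0(v_i) = g_0(x_i) for every 1 ≤ i ≤ n is a perfect target set for G (and likewise the assignment v_i ↦ g_0(y_i) is a perfect target set for G). -/

import Mathlib

/-! Non-progressive spread of influence under the strict majority threshold. -/

/-- The degree `d(v)` of a vertex: the number of its neighbors. -/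
noncomputable def vdeg {V : Type*} (G : SimpleGraph V) (v : V) : ℕ :=
  {u | G.Adj v u}.ncard

/-- The strict majority threshold `t(v) = ⌈(d(v)+1)/2⌉`. -/
noncomputable def vthr {V : Type*} (G : SimpleGraph V) (v : V) : ℕ :=
  (vdeg G v + 2) / 2

/-- The number of neighbors of `v` that are currently infected under `f`. -/
noncomputable def infNbrs {V : Type*} (G : SimpleGraph V) (f : V → Prop) (v : V) : ℕ :=
  {u | G.Adj v u ∧ f u}.ncard

/-- The state `f_τ` of the non-progressive strict majority process started at `f0`:
`f_τ(v) = 1` iff at least `t(v)` neighbors of `v` were infected at time `τ - 1`. -/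
def stateAt {V : Type*} (G : SimpleGraph V) (f0 : V → Prop) : ℕ → V → Prop
  | 0 => f0
  | τ + 1 => fun v => vthr G v ≤ infNbrs G (stateAt G f0 τ) v

/-- `f0` is a perfect target set: at some finite time every vertex is infected. -/
def IsPTS {V : Type*} (G : SimpleGraph V) (f0 : V → Prop) : Prop :=
  ∃ τ : ℕ, ∀ v, stateAt G f0 τ v

/-- The cost of an initial assignment: the number of initially infected vertices. -/
noncomputable def ptsCost {V : Type*} (f0 : V → Prop) : ℕ :=
  {v | f0 v}.ncard

/-- `NPPTS G`: the minimum cost of a perfect target set of `G` (non-progressive model). -/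
noncomputable def NPPTS {V : Type*} (G : SimpleGraph V) : ℕ :=
  sInf {c | ∃ f0 : V → Prop, IsPTS G f0 ∧ ptsCost f0 = c}

/-- The bipartite double cover of `G`: vertices are `(v, b)` for `v ∈ V(G)` and
`b ∈ {false, true}` (part `X` is `V × {false}`, part `Y` is `V × {true}`), and
`(v_i, false)` is adjacent to `(v_j, true)` iff `v_i v_j ∈ E(G)`. -/
def doubleCover {V : Type*} (G : SimpleGraph V) : SimpleGraph (V × Bool) where
  Adj x y := G.Adj x.1 y.1 ∧ x.2 ≠ y.2
  symm := by
    constructor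
    intro x y h
    exact ⟨h.1.symm, h.2.symm⟩
  loopless := by
    constructor
    intro x h
    exact h.2 rfl

lemma dc_nbr_set {V : Type*} (G : SimpleGraph V) (v : V) (b : Bool) :
    {p | (doubleCover G).Adj (v, b) p} = (fun u => (u, !b)) '' {u | G.Adj v u} := by
  ext ⟨u, c⟩
  simp only [doubleCover, Set.mem_setOf_eq, Set.mem_image, Prod.mk.injEq]
  constructor
  · rintro ⟨ha, hb⟩
    exact ⟨u, ha, rfl, by cases b <;> cases c <;> simp_all⟩
  · rintro ⟨w, hw, rfl, rfl⟩
    exact ⟨hw, by cases b <;> simp⟩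

lemma dc_inf_set {V : Type*} (G : SimpleGraph V) (g : V × Bool → Prop) (v : V) (b : Bool) :
    {p | (doubleCover G).Adj (v, b) p ∧ g p} =
      (fun u => (u, !b)) '' {u | G.Adj v u ∧ g (u, !b)} := by
  ext ⟨u, c⟩
  simp only [doubleCover, Set.mem_setOf_eq, Set.mem_image, Prod.mk.injEq]
  constructor
  · rintro ⟨⟨ha, hb⟩, hg⟩
    have : c = !b := by cases b <;> cases c <;> simp_all
    subst this
    exact ⟨u, ⟨ha, hg⟩, rfl, rfl⟩
  · rintro ⟨w, ⟨hw, hg⟩, rfl, rfl⟩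
    exact ⟨⟨hw, by cases b <;> simp⟩, hg⟩

lemma mk_inj {V : Type*} (b : Bool) : Function.Injective (fun u : V => (u, !b)) := by
  intro x y h; exact congrArg Prod.fst h

lemma vdeg_dc {V : Type*} (G : SimpleGraph V) (v : V) (b : Bool) :
    vdeg (doubleCover G) (v, b) = vdeg G v := by
  rw [vdeg, vdeg, dc_nbr_set, Set.ncard_image_of_injective _ (mk_inj b)]

lemma vthr_dc {V : Type*} (G : SimpleGraph V) (v : V) (b : Bool) :
    vthr (doubleCover G) (v, b) = vthr G v := by
  rw [vthr, vthr, vdeg_dc]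

lemma infNbrs_dc {V : Type*} (G : SimpleGraph V) (g : V × Bool → Prop) (v : V) (b : Bool) :
    infNbrs (doubleCover G) g (v, b) = infNbrs G (fun u => g (u, !b)) v := by
  rw [infNbrs, infNbrs, dc_inf_set, Set.ncard_image_of_injective _ (mk_inj b)]

lemma state_dc {V : Type*} (G : SimpleGraph V) (g0 : V × Bool → Prop) :
    ∀ (τ : ℕ) (b : Bool) (v : V),
      stateAt G (fun u => g0 (u, b)) τ v ↔
        stateAt (doubleCover G) g0 τ (v, if Even τ then b else !b) := by
  intro τ
  induction τ with
  | zero => intro b v; simp [stateAt]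
  | succ n ih =>
    intro b v
    have hb : (if Even (n + 1) then b else !b) = !(if Even n then b else !b) := by
      by_cases he : Even n
      · have : ¬ Even (n + 1) := by simp [Nat.even_add_one, he]
        simp [he, this]
      · have : Even (n + 1) := by simp [Nat.even_add_one, he]
        simp [he, this]
    show vthr G v ≤ _ ↔ vthr (doubleCover G) _ ≤ _
    rw [hb, vthr_dc, infNbrs_dc]
    have : (fun u => stateAt (doubleCover G) g0 n (u, !(!(if Even n then b else !b)))) =
        fun u => stateAt (doubleCover G) g0 n (u, if Even n then b else !b) := by
      funext u; simp
    rw [this]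
    have hset : {u | G.Adj v u ∧ stateAt G (fun u => g0 (u, b)) n u} =
        {u | G.Adj v u ∧ stateAt (doubleCover G) g0 n (u, if Even n then b else !b)} := by
      ext u; simp only [Set.mem_setOf_eq]
      exact and_congr_right fun _ => ih b u
    rw [infNbrs, infNbrs, hset]

/-- If `g0` is a perfect target set for the bipartite double cover `H`
of `G` (under the non-progressive strict majority process), then the assignment
`v_i ↦ g0(x_i)` is a perfect target set for `G`, and likewise `v_i ↦ g0(y_i)`. -/
theorem stmt_2 {V : Type*} [Fintype V] (G : SimpleGraph V) (g0 : V × Bool → Prop)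
    (h : IsPTS (doubleCover G) g0) :
    IsPTS G (fun v => g0 (v, false)) ∧ IsPTS G (fun v => g0 (v, true)) := by
  obtain ⟨τ, hτ⟩ := h
  constructor
  · exact ⟨τ, fun v => (state_dc G g0 τ false v).mpr (hτ _)⟩
  · exact ⟨τ, fun v => (state_dc G g0 τ true v).mpr (hτ _)⟩
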